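/- Let x : V × {1,…,ℓ} → {0,1} satisfy Σ_{v∈V} x(v,s) = 1 for all s, the source constraints x(v,1) = 0 for all v ∈ V(S), and the pairwise connectivity constraints x(v0,s) + x(v,s+1) ≤ 1 for all v0 ∈ V, v ∈ V(v0), 1 ≤ s < ℓ. Then x(v,s) = 0 for all v ∈ V(S) and all s ∈ {1,…,ℓ}. -/
import Mathlib


/-- If `x` satisfies the assignment constraints, the source constraints `x(v,1) = 0` for
all `v ∈ V(S)`, and the pairwise connectivity constraints, then `x(v,s) = 0` for all
`v ∈ V(S)` and all `s ∈ {1,…,ℓ}`. -/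
theorem source_zero_propagates {I : Type*} [DecidableEq I] (L : I → I → Prop) (S : I)
    (V : Finset I) (ℓ : ℕ) (x : I → ℕ → ℤ)
    (hbin : ∀ v ∈ V, ∀ s, x v s = 0 ∨ x v s = 1)
    (hassign : ∀ s, 1 ≤ s → s ≤ ℓ → ∑ v ∈ V, x v s = 1)
    (hsrc : ∀ v ∈ V, ¬ Relation.ReflTransGen L S v → x v 1 = 0)
    (hpair : ∀ v0 ∈ V, ∀ v ∈ V, v ≠ v0 → ¬ Relation.ReflTransGen L v0 v →
      ∀ s, 1 ≤ s → s < ℓ → x v0 s + x v (s + 1) ≤ 1) :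
    ∀ v ∈ V, ¬ Relation.ReflTransGen L S v → ∀ s, 1 ≤ s → s ≤ ℓ → x v s = 0 := by
  have main : ∀ s, 1 ≤ s → s ≤ ℓ → ∀ v ∈ V, ¬ Relation.ReflTransGen L S v → x v s = 0 := by
    intro s
    induction s with
    | zero => intro h; omega
    | succ n ih =>
      intro h1 hle v hv hnr
      rcases Nat.eq_or_lt_of_le h1 with h | h
      · have h0 : n = 0 := by omega
        subst h0
        exact hsrc v hv hnr
      · have hn1 : 1 ≤ n := by omega
        have hnl : n < ℓ := by omega
        -- find v0 with x v0 n = 1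
        have hsum := hassign n hn1 (le_of_lt hnl)
        have hex : ∃ v0 ∈ V, x v0 n = 1 := by
          by_contra hno
          push_neg at hno
          have : ∑ v ∈ V, x v n = 0 := by
            apply Finset.sum_eq_zero
            intro w hw
            rcases hbin w hw n with h0 | h1'
            · exact h0
            · exact absurd h1' (hno w hw)
          omega
        obtain ⟨v0, hv0, hx0⟩ := hex
        have hreach0 : Relation.ReflTransGen L S v0 := by
          by_contra hnr0
          have := ih hn1 (le_of_lt hnl) v0 hv0 hnr0
          omega
        have hne : v ≠ v0 := by
          rintro rfl; exact hnr hreach0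
        have hnr0v : ¬ Relation.ReflTransGen L v0 v := fun hr => hnr (hreach0.trans hr)
        have := hpair v0 hv0 v hv hne hnr0v n hn1 hnl
        rcases hbin v hv (n + 1) with h0 | h1'
        · exact h0
        · omega
  intro v hv hnr s h1 hle
  exact main s h1 hle v hv hnr
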